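/- If f is convex of order α (0 ≤ α < 1) on the unit disk with f''(0)=0, then for all z in the unit disk, |f(z)| ≤ ∫₀^{|z|} (1-t²)^{-(1-α)} dt. -/

import Mathlib

open Metric Complex Set

lemma aux_reh (h : ℂ → ℂ) (c : ℝ) (hc : 0 < c)
    (hdiff : DifferentiableOn ℂ h (ball 0 1))
    (hh0 : h 0 = 0) (hh'0 : HasDerivAt h 0 0)
    (hre : ∀ z ∈ ball (0:ℂ) 1, -c < (h z).re) :
    ∀ z ∈ ball (0:ℂ) 1,
      (h z).re ≤ 2*c*‖z‖^2/(1-‖z‖^2) := by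
  have hden : ∀ z ∈ ball (0:ℂ) 1, h z + 2*c ≠ 0 := by
    intro z hz hzero
    have h1 : (h z + 2*(c:ℂ)).re = (h z).re + 2*c := by simp
    have := hre z hz
    rw [hzero] at h1
    simp only [Complex.zero_re] at h1
    linarith
  set ω : ℂ → ℂ := fun z => h z / (h z + 2*c) with hωdef
  have hωdiff : DifferentiableOn ℂ ω (ball 0 1) :=
    hdiff.div (hdiff.add_const _) hden
  have hω0 : ω 0 = 0 := by simp [hωdef, hh0]
  have hωlt : ∀ z ∈ ball (0:ℂ) 1, ‖ω z‖ < 1 := by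
    intro z hz
    have hne := hden z hz
    rw [hωdef]
    simp only
    rw [norm_div, div_lt_one (norm_pos_iff.mpr hne)]
    rw [Complex.norm_def, Complex.norm_def]
    apply Real.sqrt_lt_sqrt (Complex.normSq_nonneg _)
    have h1 : Complex.normSq (h z + 2*c) =
        Complex.normSq (h z) + 4*c*(h z).re + 4*c^2 := by
      simp [Complex.normSq_apply, Complex.add_re, Complex.add_im]
      ring
    have := hre z hz
    nlinarith
  have hωmaps : MapsTo ω (ball 0 1) (ball 0 1) := fun z hz =>
    mem_ball_zero_iff.2 (hωlt z hz)
  have hω'0 : deriv ω 0 = 0 := by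
    have : HasDerivAt ω ((0 * (h 0 + 2*c) - h 0 * 0) / (h 0 + 2*c)^2) 0 :=
      hh'0.div (hh'0.add_const _) (hden 0 (by simp))
    rw [hh0] at this
    simpa using this.deriv
  -- first Schwarz: |dslope ω 0 z| ≤ 1
  set g₁ : ℂ → ℂ := dslope ω 0 with hg₁def
  have hg₁diff : DifferentiableOn ℂ g₁ (ball 0 1) :=
    (differentiableOn_dslope (ball_mem_nhds _ one_pos)).2 hωdiff
  have hg₁0 : g₁ 0 = 0 := by rw [hg₁def, dslope_same]; exact hω'0
  have hg₁le : ∀ z ∈ ball (0:ℂ) 1, ‖g₁ z‖ ≤ 1 := by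
    intro z hz
    have := Complex.norm_dslope_le_div_of_mapsTo_ball hωdiff
      (by rw [hω0]; exact hωmaps.mono_right ball_subset_closedBall) hz
    simpa using this
  -- second Schwarz: |dslope g₁ 0 z| ≤ 1
  have hg₂le : ∀ z ∈ ball (0:ℂ) 1, ‖dslope g₁ 0 z‖ ≤ 1 := by
    intro z hz
    by_contra hcon
    push_neg at hcon
    set R : ℝ := (1 + ‖dslope g₁ 0 z‖) / 2 with hR
    have hR1 : 1 < R := by rw [hR]; linarith
    have : ‖dslope g₁ 0 z‖ ≤ R / 1 := by
      apply Complex.norm_dslope_le_div_of_mapsTo_ball hg₁diff _ hz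
      rw [hg₁0]
      intro w hw
      rw [mem_closedBall_zero_iff]
      calc ‖g₁ w‖ ≤ 1 := hg₁le w hw
        _ ≤ R := hR1.le
    rw [div_one] at this
    rw [hR] at this
    linarith
  -- |ω z| ≤ |z|^2
  have hωsq : ∀ z ∈ ball (0:ℂ) 1, ‖ω z‖ ≤ ‖z‖^2 := by
    intro z hz
    have e1 : ω z = z * g₁ z := by
      have := sub_smul_dslope ω 0 z
      rw [hω0, sub_zero, sub_zero, smul_eq_mul] at this
      rw [← this, hg₁def]
    have e2 : g₁ z = z * dslope g₁ 0 z := by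
      have := sub_smul_dslope g₁ 0 z
      rw [hg₁0, sub_zero, sub_zero, smul_eq_mul] at this
      rw [← this]
    calc ‖ω z‖ = ‖z‖ * (‖z‖ *
            ‖dslope g₁ 0 z‖) := by rw [e1, e2]; simp [norm_mul]
      _ ≤ ‖z‖ * (‖z‖ * 1) := by
          apply mul_le_mul_of_nonneg_left _ (norm_nonneg _)
          exact mul_le_mul_of_nonneg_left (hg₂le z hz) (norm_nonneg _)
      _ = ‖z‖^2 := by ring
  -- final bound
  intro z hz
  have hr1 : ‖z‖ < 1 := mem_ball_zero_iff.1 hz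
  have hr0 : (0:ℝ) ≤ ‖z‖ := norm_nonneg _
  have hωz := hωsq z hz
  have hωz1 := hωlt z hz
  have hid : h z = 2*c * ω z / (1 - ω z) := by
    have hne := hden z hz
    have hcne : (c:ℂ) ≠ 0 := by exact_mod_cast hc.ne'
    rw [hωdef]
    simp only
    field_simp
    ring
  have hd1 : (1:ℝ) - ‖z‖^2 ≤ ‖1 - ω z‖ := by
    calc (1:ℝ) - ‖z‖^2 ≤ 1 - ‖ω z‖ := by linarith
      _ ≤ ‖1 - ω z‖ := by
          have := norm_sub_norm_le (1:ℂ) (ω z)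
          simpa using this
  calc (h z).re ≤ ‖h z‖ := Complex.re_le_norm _
    _ = 2*c * ‖ω z‖ / ‖1 - ω z‖ := by
        rw [hid, norm_div, norm_mul, norm_mul]
        simp [abs_of_pos hc]
    _ ≤ 2*c*‖z‖^2/(1-‖z‖^2) := by
        apply div_le_div₀ (by positivity) _ (by nlinarith) hd1
        nlinarith [norm_nonneg (ω z)]

lemma aux_deriv_bound
    (f : ℂ → ℂ) (α : ℝ) (hα1 : α < 1)
    (hf : DifferentiableOn ℂ f (Metric.ball 0 1))
    (hf' : ∀ z ∈ Metric.ball (0:ℂ) 1, deriv f z ≠ 0)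
    (hf1 : deriv f 0 = 1) (hf2 : deriv (deriv f) 0 = 0)
    (hconv : ∀ z ∈ Metric.ball (0:ℂ) 1,
      α < (1 + z * (deriv (deriv f) z / deriv f z)).re) :
    ∀ z ∈ Metric.ball (0:ℂ) 1,
      ‖deriv f z‖ ≤ (1 - ‖z‖^2) ^ (-(1-α)) := by
  set c : ℝ := 1 - α with hcdef
  have hc : 0 < c := by simp only [hcdef]; linarith
  have h0ball : (0:ℂ) ∈ ball (0:ℂ) 1 := by simp
  have hfa : AnalyticOnNhd ℂ f (ball 0 1) := hf.analyticOnNhd isOpen_ball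
  have hd1 : AnalyticOnNhd ℂ (deriv f) (ball 0 1) := hfa.deriv
  have hd2 : AnalyticOnNhd ℂ (deriv (deriv f)) (ball 0 1) := hd1.deriv
  set h : ℂ → ℂ := fun z => z * (deriv (deriv f) z / deriv f z) with hhdef
  have hdiffh : DifferentiableOn ℂ h (ball 0 1) :=
    differentiableOn_id.mul ((hd2.differentiableOn).div (hd1.differentiableOn) hf')
  have hh0 : h 0 = 0 := by simp [hhdef]
  have hh'0 : HasDerivAt h 0 0 := by
    have hk : HasDerivAt (fun z => deriv (deriv f) z / deriv f z)
        ((deriv (deriv (deriv f)) 0 * deriv f 0 -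
          deriv (deriv f) 0 * deriv (deriv f) 0) / deriv f 0 ^ 2) 0 :=
      ((hd2 0 h0ball).differentiableAt.hasDerivAt).div
        ((hd1 0 h0ball).differentiableAt.hasDerivAt) (by rw [hf1]; exact one_ne_zero)
    have := (hasDerivAt_id (0:ℂ)).mul hk
    have h' : HasDerivAt h _ 0 := this
    simpa [hf1, hf2] using h'
  have hre : ∀ z ∈ ball (0:ℂ) 1, -c < (h z).re := by
    intro z hz
    have := hconv z hz
    rw [Complex.add_re, Complex.one_re] at this
    simp only [hhdef, hcdef]
    linarith
  have hkey := aux_reh h c hc hdiffh hh0 hh'0 hre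
  intro z hz
  rcases eq_or_ne z 0 with rfl | hzne
  · simp [hf1]
  have hr1 : ‖z‖ < 1 := mem_ball_zero_iff.1 hz
  have hr0 : 0 < ‖z‖ := norm_pos_iff.mpr hzne
  set r : ℝ := ‖z‖ with hrdef
  set e : ℂ := (r:ℂ)⁻¹ * z with hedef
  have hrne : (r:ℂ) ≠ 0 := by exact_mod_cast hr0.ne'
  have habse : ‖e‖ = 1 := by
    rw [hedef, norm_mul, norm_inv, Complex.norm_real, Real.norm_eq_abs, abs_of_pos hr0, ← hrdef]
    field_simp
  have habste : ∀ t : ℝ, ‖(t:ℂ) * e‖ = |t| := by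
    intro t
    rw [norm_mul, habse, Complex.norm_real, Real.norm_eq_abs, mul_one]
  have hmem : ∀ t ∈ Icc (0:ℝ) r, (t:ℂ) * e ∈ ball (0:ℂ) 1 := by
    intro t ht
    rw [mem_ball_zero_iff, habste, _root_.abs_of_nonneg ht.1]
    exact lt_of_le_of_lt ht.2 hr1
  set w : ℝ → ℂ := fun t => deriv f ((t:ℂ) * e) with hwdef
  set u : ℝ → ℝ := fun t => ‖w t‖ with hudef
  set v : ℝ → ℝ := fun t => u t * (1 - t^2) ^ c with hvdef
  -- derivative data for w
  have hw' : ∀ t ∈ Icc (0:ℝ) r,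
      HasDerivAt w (deriv (deriv f) ((t:ℂ) * e) * e) t := by
    intro t ht
    have h1 : HasDerivAt (fun ζ : ℂ => deriv f (ζ * e))
        (deriv (deriv f) ((t:ℂ) * e) * e) ((t:ℂ)) := by
      have hc1 : HasDerivAt (fun ζ : ℂ => ζ * e) e (t:ℂ) := by
        simpa using (hasDerivAt_id ((t:ℂ))).mul_const e
      have hc2 : HasDerivAt (deriv f) (deriv (deriv f) ((t:ℂ)*e)) ((t:ℂ)*e) :=
        (hd1 _ (hmem t ht)).differentiableAt.hasDerivAt
      exact hc2.comp (t:ℂ) hc1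
    exact h1.comp_ofReal
  have hwne : ∀ t ∈ Icc (0:ℝ) r, w t ≠ 0 := fun t ht => hf' _ (hmem t ht)
  -- derivative of u
  have hu' : ∀ t ∈ Icc (0:ℝ) r,
      HasDerivAt u ((inner ℝ (w t) (deriv (deriv f) ((t:ℂ) * e) * e) : ℝ) / u t) t := by
    intro t ht
    set W := deriv (deriv f) ((t:ℂ) * e) * e with hWdef
    have hne := hwne t ht
    have hq : HasDerivAt (fun s => ‖w s‖^2) (2 * (inner ℝ (w t) W : ℝ)) t :=
      (hw' t ht).norm_sq
    have hupos : 0 < u t := by simp [hudef, norm_pos_iff, hne]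
    have hsq : HasDerivAt (fun s => Real.sqrt (‖w s‖^2))
        (1 / (2 * Real.sqrt (‖w t‖^2)) * (2 * (inner ℝ (w t) W : ℝ))) t :=
      (Real.hasDerivAt_sqrt (by positivity)).comp t hq
    have heq : (fun s => Real.sqrt (‖w s‖^2)) = u := by
      funext s; rw [Real.sqrt_sq (norm_nonneg _)]
    rw [heq] at hsq
    have heq2 : 1 / (2 * Real.sqrt (‖w t‖^2)) * (2 * (inner ℝ (w t) W : ℝ))
        = (inner ℝ (w t) W : ℝ) / u t := by
      rw [Real.sqrt_sq (norm_nonneg _)]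
      have hut : u t = ‖w t‖ := rfl
      rw [hut, one_div, inv_mul_eq_div, mul_div_mul_left _ _ (two_ne_zero : (2:ℝ) ≠ 0)]
    rwa [heq2] at hsq
  -- derivative of (1-t^2)^c
  have hg' : ∀ t ∈ Icc (0:ℝ) r,
      HasDerivAt (fun s : ℝ => (1 - s^2) ^ c) (c * (1 - t^2)^(c-1) * (-(2*t))) t := by
    intro t ht
    have hbpos : 0 < 1 - t^2 := by
      have h1 : t < 1 := lt_of_le_of_lt ht.2 hr1
      nlinarith [ht.1]
    have hb : HasDerivAt (fun s : ℝ => 1 - s^2) (-(2*t)) t := by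
      simpa using (hasDerivAt_pow 2 t).const_sub 1
    exact (Real.hasDerivAt_rpow_const (Or.inl hbpos.ne')).comp t hb
  -- derivative of v
  have hv' : ∀ t ∈ Icc (0:ℝ) r,
      HasDerivAt v ((inner ℝ (w t) (deriv (deriv f) ((t:ℂ) * e) * e) : ℝ) / u t * (1 - t^2)^c
        + u t * (c * (1 - t^2)^(c-1) * (-(2*t)))) t := by
    intro t ht
    exact (hu' t ht).mul (hg' t ht)
  have hv'nonpos : ∀ t ∈ Ioo (0:ℝ) r,
      (inner ℝ (w t) (deriv (deriv f) ((t:ℂ) * e) * e) : ℝ) / u t * (1 - t^2)^c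
        + u t * (c * (1 - t^2)^(c-1) * (-(2*t))) ≤ 0 := by
    intro t ht
    have htIcc := Ioo_subset_Icc_self ht
    have ht0 : 0 < t := ht.1
    have ht1 : t < 1 := ht.2.trans hr1
    have hbpos : 0 < 1 - t^2 := by nlinarith
    have hne := hwne t htIcc
    have hupos : 0 < u t := by simp [hudef, norm_pos_iff, hne]
    set W := deriv (deriv f) ((t:ℂ) * e) * e with hWdef
    clear_value W
    have hh_te : (h ((t:ℂ)*e)).re ≤ 2*c*t^2/(1-t^2) := by
      have := hkey ((t:ℂ)*e) (hmem t htIcc)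
      rwa [habste t, _root_.abs_of_pos ht0] at this
    have hWw : h ((t:ℂ)*e) = (t:ℂ) * (W / w t) := by
      rw [hhdef, hWdef, hwdef]
      field_simp
    have hnsq : Complex.normSq (w t) = u t ^ 2 := by
      rw [← Complex.sq_norm]
    have hre_div : (W / w t).re = (inner ℝ (w t) W : ℝ) / u t ^ 2 := by
      rw [Complex.div_re, Complex.inner, Complex.mul_re, Complex.conj_re, Complex.conj_im,
        hnsq]
      ring
    have hIbound : (inner ℝ (w t) W : ℝ) ≤ u t ^ 2 * (2*c*t/(1-t^2)) := by
      have h1 : (h ((t:ℂ)*e)).re = t * (W / w t).re := by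
        rw [hWw, Complex.re_ofReal_mul]
      have h2 : (W / w t).re ≤ 2*c*t/(1-t^2) := by
        have h3 : t * (W / w t).re ≤ 2*c*t^2/(1-t^2) := h1 ▸ hh_te
        have h4 : 2*c*t^2/(1-t^2) = t * (2*c*t/(1-t^2)) := by field_simp
        rw [h4] at h3
        exact le_of_mul_le_mul_left h3 ht0
      calc (inner ℝ (w t) W : ℝ) = u t ^ 2 * (W / w t).re := by
            rw [hre_div]; field_simp
        _ ≤ u t ^ 2 * (2*c*t/(1-t^2)) := by
            apply mul_le_mul_of_nonneg_left h2 (by positivity)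
    have hrp : (1 - t^2)^(c-1) = (1-t^2)^c / (1-t^2) := by
      rw [Real.rpow_sub hbpos, Real.rpow_one]
    have hrpowpos : 0 < (1 - t^2)^c := Real.rpow_pos_of_pos hbpos c
    have hterm1 : (inner ℝ (w t) W : ℝ) / u t ≤ u t * (2*c*t/(1-t^2)) := by
      rw [div_le_iff₀ hupos]
      calc (inner ℝ (w t) W : ℝ) ≤ u t ^ 2 * (2*c*t/(1-t^2)) := hIbound
        _ = u t * (2*c*t/(1-t^2)) * u t := by ring
    have hterm2 : u t * (c * (1 - t^2)^(c-1) * (-(2*t)))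
        = -(2*c*t*u t*((1-t^2)^c/(1-t^2))) := by
      rw [hrp]; ring
    calc (inner ℝ (w t) W : ℝ) / u t * (1 - t^2)^c + u t * (c * (1 - t^2)^(c-1) * (-(2*t)))
        ≤ u t * (2*c*t/(1-t^2)) * (1 - t^2)^c + u t * (c * (1 - t^2)^(c-1) * (-(2*t))) := by
          apply add_le_add_left
          exact mul_le_mul_of_nonneg_right hterm1 hrpowpos.le
      _ = u t * (2*c*t/(1-t^2)) * (1 - t^2)^c - 2*c*t*u t*((1-t^2)^c/(1-t^2)) := by
          rw [hterm2]; ring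
      _ = 0 := by field_simp; ring
  -- antitone
  have hcont_v : ContinuousOn v (Icc 0 r) :=
    fun t ht => (hv' t ht).continuousAt.continuousWithinAt
  have hanti : AntitoneOn v (Icc 0 r) := by
    apply antitoneOn_of_deriv_nonpos (convex_Icc 0 r) hcont_v
    · rw [interior_Icc]
      exact fun t ht =>
        ((hv' t (Ioo_subset_Icc_self ht)).differentiableAt).differentiableWithinAt
    · rw [interior_Icc]
      intro t ht
      rw [(hv' t (Ioo_subset_Icc_self ht)).deriv]
      exact hv'nonpos t ht
  have h0r : (0:ℝ) ≤ r := hr0.le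
  have hv0 : v 0 = 1 := by
    simp [hvdef, hudef, hwdef, hf1, Real.one_rpow]
  have hvr : v r ≤ 1 := by
    rw [← hv0]
    exact hanti (left_mem_Icc.2 h0r) (right_mem_Icc.2 h0r) h0r
  have hze : ((r:ℂ)) * e = z := by
    rw [hedef]; field_simp
  have hvrval : v r = ‖deriv f z‖ * (1 - r^2)^c := by
    simp only [hvdef, hudef, hwdef, hze]
  have hb2 : (0:ℝ) < 1 - r^2 := by nlinarith
  have hbpow : 0 < (1 - r^2)^c := Real.rpow_pos_of_pos hb2 c
  have hgoal : ‖deriv f z‖ ≤ ((1 - r^2)^c)⁻¹ := by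
    rw [inv_eq_one_div, le_div_iff₀ hbpow]
    rw [hvrval] at hvr
    exact hvr
  calc ‖deriv f z‖ ≤ ((1 - r^2)^c)⁻¹ := hgoal
    _ = (1 - ‖z‖^2) ^ (-(1-α)) := by
        rw [← hrdef, ← hcdef, Real.rpow_neg hb2.le]

theorem convex_order_alpha_zero_second_deriv_growth_upper
    (f : ℂ → ℂ) (α : ℝ) (hα0 : 0 ≤ α) (hα1 : α < 1)
    (hf : DifferentiableOn ℂ f (Metric.ball 0 1))
    (hf' : ∀ z ∈ Metric.ball (0:ℂ) 1, deriv f z ≠ 0)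
    (hf0 : f 0 = 0) (hf1 : deriv f 0 = 1) (hf2 : deriv (deriv f) 0 = 0)
    (hconv : ∀ z ∈ Metric.ball (0:ℂ) 1,
      α < (1 + z * (deriv (deriv f) z / deriv f z)).re) :
    ∀ z ∈ Metric.ball (0:ℂ) 1,
      ‖f z‖ ≤ ∫ t in (0:ℝ)..‖z‖, (1 - t ^ 2) ^ (-(1 - α)) := by
  have hbound := aux_deriv_bound f α hα1 hf hf' hf1 hf2 hconv
  have hfa : AnalyticOnNhd ℂ f (ball 0 1) := hf.analyticOnNhd isOpen_ball
  have hd1 : AnalyticOnNhd ℂ (deriv f) (ball 0 1) := hfa.deriv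
  intro z hz
  rcases eq_or_ne z 0 with rfl | hzne
  · simp [hf0]
  have hr1 : ‖z‖ < 1 := mem_ball_zero_iff.1 hz
  have hr0 : 0 < ‖z‖ := norm_pos_iff.mpr hzne
  set r : ℝ := ‖z‖ with hrdef
  have h0r : (0:ℝ) ≤ r := hr0.le
  set e : ℂ := (r:ℂ)⁻¹ * z with hedef
  have hrne : (r:ℂ) ≠ 0 := by exact_mod_cast hr0.ne'
  have habse : ‖e‖ = 1 := by
    rw [hedef, norm_mul, norm_inv, Complex.norm_real, Real.norm_eq_abs, _root_.abs_of_pos hr0, ← hrdef]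
    field_simp
  have habste : ∀ t : ℝ, ‖(t:ℂ) * e‖ = |t| := by
    intro t
    rw [norm_mul, habse, Complex.norm_real, Real.norm_eq_abs, mul_one]
  have hmem : ∀ t ∈ Icc (0:ℝ) r, (t:ℂ) * e ∈ ball (0:ℂ) 1 := by
    intro t ht
    rw [mem_ball_zero_iff, habste, _root_.abs_of_nonneg ht.1]
    exact lt_of_le_of_lt ht.2 hr1
  set G : ℝ → ℂ := fun t => deriv f ((t:ℂ) * e) * e with hGdef
  have hF' : ∀ t ∈ uIcc (0:ℝ) r, HasDerivAt (fun s : ℝ => f ((s:ℂ) * e)) (G t) t := by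
    rw [uIcc_of_le h0r]
    intro t ht
    have h1 : HasDerivAt (fun ζ : ℂ => f (ζ * e)) (deriv f ((t:ℂ) * e) * e) ((t:ℂ)) := by
      have hc1 : HasDerivAt (fun ζ : ℂ => ζ * e) e (t:ℂ) := by
        simpa using (hasDerivAt_id ((t:ℂ))).mul_const e
      have hc2 : HasDerivAt f (deriv f ((t:ℂ)*e)) ((t:ℂ)*e) :=
        (hfa _ (hmem t ht)).differentiableAt.hasDerivAt
      exact hc2.comp (t:ℂ) hc1
    exact h1.comp_ofReal
  have hGcont : ContinuousOn G (Icc 0 r) := by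
    apply ContinuousOn.mul _ continuousOn_const
    exact (hd1.continuousOn).comp
      ((Complex.continuous_ofReal.mul continuous_const).continuousOn) hmem
  have hGint : IntervalIntegrable G MeasureTheory.volume 0 r := by
    apply ContinuousOn.intervalIntegrable
    rwa [uIcc_of_le h0r]
  have hFTC : ∫ t in (0:ℝ)..r, G t = f z - f 0 := by
    have := intervalIntegral.integral_eq_sub_of_hasDerivAt hF' hGint
    rw [this]
    have hze : ((r:ℂ)) * e = z := by rw [hedef]; field_simp
    norm_num [hze]
  have h1 : ‖f z‖ = ‖∫ t in (0:ℝ)..r, G t‖ := by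
    rw [hFTC, hf0, sub_zero]
  have h2 : ‖∫ t in (0:ℝ)..r, G t‖ ≤ ∫ t in (0:ℝ)..r, ‖G t‖ :=
    intervalIntegral.norm_integral_le_integral_norm h0r
  have hintcont : ContinuousOn (fun t : ℝ => (1 - t^2) ^ (-(1-α))) (Icc 0 r) := by
    apply ContinuousOn.rpow_const
    · exact (continuous_const.sub (continuous_pow 2)).continuousOn
    · intro t ht
      left
      have ht1 : t < 1 := lt_of_le_of_lt ht.2 hr1
      have : 0 < 1 - t^2 := by nlinarith [ht.1]
      exact this.ne'
  have h3 : ∫ t in (0:ℝ)..r, ‖G t‖ ≤ ∫ t in (0:ℝ)..r, (1 - t^2) ^ (-(1-α)) := by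
    apply intervalIntegral.integral_mono_on h0r
    · apply ContinuousOn.intervalIntegrable
      rw [uIcc_of_le h0r]
      exact hGcont.norm
    · apply ContinuousOn.intervalIntegrable
      rw [uIcc_of_le h0r]
      exact hintcont
    · intro t ht
      have hGnorm : ‖G t‖ = ‖deriv f ((t:ℂ)*e)‖ := by
        rw [hGdef]
        simp only [norm_mul, habse, mul_one]
      rw [hGnorm]
      have := hbound ((t:ℂ)*e) (hmem t ht)
      rwa [habste t, _root_.abs_of_nonneg ht.1] at this
  calc ‖f z‖ = ‖∫ t in (0:ℝ)..r, G t‖ := h1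
    _ ≤ ∫ t in (0:ℝ)..r, ‖G t‖ := h2
    _ ≤ ∫ t in (0:ℝ)..r, (1 - t^2) ^ (-(1-α)) := h3
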